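/- Let X be a nonnegative random variable with finite expectation and Z any random variable. Then E_Z[max{log₂ E[X | Z], 0}] ≤ max{log₂ E[X], 0} + e^{-1}·log₂ e. -/

import Mathlib

open MeasureTheory

lemma aux_log_div_e {t : ℝ} (ht : 0 < t) : Real.log t ≤ t / Real.exp 1 := by
  have h := Real.log_le_sub_one_of_pos (x := t / Real.exp 1) (by positivity)
  rw [Real.log_div ht.ne' (Real.exp_pos 1).ne', Real.log_exp] at h
  linarith

/-- For a nonnegative integrable random variable `X` and sub-σ-algebra `m`,
`E[max{log₂ E[X|m], 0}] ≤ max{log₂ E[X], 0} + e⁻¹ log₂ e`. -/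
theorem stmt_9 {Ω : Type*} {mΩ : MeasurableSpace Ω} (μ : Measure Ω) [IsProbabilityMeasure μ]
    (m : MeasurableSpace Ω) (hm : m ≤ mΩ) (X : Ω → ℝ) (hX0 : 0 ≤ X)
    (hXi : Integrable X μ) :
    ∫ ω, max (Real.logb 2 ((μ[X|m]) ω)) 0 ∂μ
      ≤ max (Real.logb 2 (∫ ω, X ω ∂μ)) 0 + (Real.exp 1)⁻¹ * Real.logb 2 (Real.exp 1) := by
  set a : ℝ := ∫ ω, X ω ∂μ with ha
  have ha0 : 0 ≤ a := integral_nonneg hX0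
  have hcne : μ[X|m] =ᵐ[μ] μ[X|m] := Filter.EventuallyEq.rfl
  have hpos : (0:ℝ) < (Real.exp 1)⁻¹ * Real.logb 2 (Real.exp 1) := by
    apply mul_pos (by positivity)
    apply Real.logb_pos one_lt_two (by
      have := Real.exp_one_gt_d9; linarith)
  rcases eq_or_lt_of_le ha0 with hz | hapos
  · -- integral of X is zero, so X = 0 a.e.
    have hX0' : X =ᵐ[μ] 0 := by
      have := (integral_eq_zero_iff_of_nonneg hX0 hXi).mp hz.symm
      exact this
    have hc0 : μ[X|m] =ᵐ[μ] 0 := by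
      calc μ[X|m] =ᵐ[μ] μ[(0:Ω → ℝ)|m] := condExp_congr_ae hX0'
        _ = 0 := condExp_zero
    have : ∫ ω, max (Real.logb 2 ((μ[X|m]) ω)) 0 ∂μ = 0 := by
      rw [integral_congr_ae (g := fun _ => (0:ℝ)) (by
        filter_upwards [hc0] with ω hω
        simp [hω])]
      simp
    rw [this, ← hz]
    simp [Real.logb]
    positivity
  · -- main case: a > 0
    have key : ∀ t : ℝ, 0 ≤ t →
        max (Real.logb 2 t) 0 ≤ max (Real.logb 2 a) 0
          + (Real.exp 1 * a)⁻¹ * Real.logb 2 (Real.exp 1) * t := by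
      intro t ht
      have h2 : (0:ℝ) ≤ (Real.exp 1 * a)⁻¹ * Real.logb 2 (Real.exp 1) * t := by
        have : (0:ℝ) < Real.exp 1 * a := by positivity
        have hlb : 0 < Real.logb 2 (Real.exp 1) := by
          apply Real.logb_pos one_lt_two (by have := Real.exp_one_gt_d9; linarith)
        positivity
      rcases eq_or_lt_of_le ht with h0 | htpos
      · rw [← h0]
        simp only [Real.logb, Real.log_zero, zero_div, max_self, mul_zero, add_zero]
        exact le_max_right _ _
      · apply max_le _ (by have := le_max_right (Real.logb 2 a) 0; linarith)
        have hlog : Real.log t ≤ Real.log a + t / (Real.exp 1 * a) := by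
          have h1 : Real.log (t / a) ≤ (t / a) / Real.exp 1 := aux_log_div_e (by positivity)
          rw [Real.log_div htpos.ne' hapos.ne'] at h1
          have heq : t / a / Real.exp 1 = t / (Real.exp 1 * a) := by
            rw [div_div, mul_comm]
          linarith [heq ▸ h1]
        have hlog2 : (0:ℝ) < Real.log 2 := Real.log_pos one_lt_two
        have : Real.logb 2 t ≤ Real.logb 2 a + (Real.exp 1 * a)⁻¹ * Real.logb 2 (Real.exp 1) * t := by
          have hea : (Real.exp 1 * a) ≠ 0 := by positivity
          have h3 : Real.log a / Real.log 2 + (Real.exp 1 * a)⁻¹ * (1 / Real.log 2) * t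
              = (Real.log a + t / (Real.exp 1 * a)) / Real.log 2 := by
            field_simp
          simp only [Real.logb, Real.log_exp]
          rw [h3]
          gcongr
        have := le_max_left (Real.logb 2 a) 0
        linarith
    set c : ℝ := (Real.exp 1 * a)⁻¹ * Real.logb 2 (Real.exp 1) with hc
    have hcnn : (0:Ω → ℝ) ≤ᵐ[μ] μ[X|m] := condExp_nonneg (Filter.Eventually.of_forall hX0)
    set g : Ω → ℝ := fun ω => max (Real.logb 2 a) 0 + c * (μ[X|m]) ω with hg
    have hgi : Integrable g μ := by
      exact (integrable_const _).add ((integrable_condExp).const_mul c)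
    have hle : ∀ᵐ ω ∂μ, max (Real.logb 2 ((μ[X|m]) ω)) 0 ≤ g ω := by
      filter_upwards [hcnn] with ω hω
      exact key _ hω
    have hfi : Integrable (fun ω => max (Real.logb 2 ((μ[X|m]) ω)) 0) μ := by
      apply Integrable.mono' hgi
      · have hmeas : Measurable[mΩ] (μ[X|m]) := (stronglyMeasurable_condExp.mono hm).measurable
        have : Measurable[mΩ] fun ω => Real.logb 2 ((μ[X|m]) ω) := by
          simp only [Real.logb]
          exact (Real.measurable_log.comp hmeas).div_const _
        exact (this.max measurable_const).aestronglyMeasurable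
      · filter_upwards [hle] with ω hω
        rw [Real.norm_eq_abs, abs_of_nonneg (le_max_right _ _)]
        exact hω
    calc ∫ ω, max (Real.logb 2 ((μ[X|m]) ω)) 0 ∂μ ≤ ∫ ω, g ω ∂μ :=
          integral_mono_ae hfi hgi hle
      _ = max (Real.logb 2 a) 0 + c * a := by
          rw [hg, integral_add (integrable_const _) (integrable_condExp.const_mul c),
            integral_const, integral_const_mul, integral_condExp hm]
          simp [ha]
      _ = max (Real.logb 2 a) 0 + (Real.exp 1)⁻¹ * Real.logb 2 (Real.exp 1) := by
          rw [hc, mul_inv]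
          field_simp
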